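/- For every positive integer n and every p ≥ 1, Γ_{2^n}(Kₙ^{p*}) ≤ (n/(n+1))^{1/p} < 1. -/

import Mathlib

open Real Set Pointwise

/-- The covering functional `Γ_m(K)`: the infimum of all `γ > 0` such that `K` can be
covered by `m` translates of `γ • K`. -/
noncomputable def coveringFunctional {n : ℕ} (m : ℕ) (K : Set (Fin n → ℝ)) : ℝ :=
  sInf {γ : ℝ | 0 < γ ∧ ∃ C : Set (Fin n → ℝ), C.Finite ∧ C.ncard = m ∧ K ⊆ C + γ • K}

/-- `Kₙ^{p*}`: the portion of the `ℓ_p` unit ball in the nonnegative orthant. -/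
noncomputable def Kpstar (n : ℕ) (p : ℝ) : Set (Fin n → ℝ) :=
  {x | (∑ i, x i ^ p) ≤ 1 ∧ ∀ i, 0 ≤ x i}

lemma rpow_superadd {p : ℝ} (hp : 1 ≤ p) {u v : ℝ} (hu : 0 ≤ u) (hv : 0 ≤ v) :
    u ^ p + v ^ p ≤ (u + v) ^ p := by
  have hp0 : (0:ℝ) < p := lt_of_lt_of_le zero_lt_one hp
  have h := NNReal.rpow_add_rpow_le_add u.toNNReal v.toNNReal hp
  have h' : ((u ^ p + v ^ p) ^ (1 / p) : ℝ) ≤ u + v := by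
    calc ((u ^ p + v ^ p) ^ (1 / p) : ℝ)
        = (((u.toNNReal ^ p + v.toNNReal ^ p) ^ (1/p) : NNReal) : ℝ) := by
          push_cast [Real.coe_toNNReal _ hu, Real.coe_toNNReal _ hv]; ring
      _ ≤ ((u.toNNReal + v.toNNReal : NNReal) : ℝ) := by exact_mod_cast h
      _ = u + v := by push_cast [Real.coe_toNNReal _ hu, Real.coe_toNNReal _ hv]; ring
  have hsum : (0:ℝ) ≤ u ^ p + v ^ p := by positivity
  calc u ^ p + v ^ p = ((u ^ p + v ^ p) ^ (1/p)) ^ p := by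
        rw [one_div, Real.rpow_inv_rpow hsum hp0.ne']
    _ ≤ (u + v) ^ p := Real.rpow_le_rpow (by positivity) h' hp0.le


/-- For every positive integer `n` and every `p ≥ 1`,
`Γ_{2^n}(Kₙ^{p*}) ≤ (n/(n+1))^(1/p) < 1`. -/
theorem coveringFunctional_two_pow_Kpstar (n : ℕ) (hn : 0 < n) (p : ℝ) (hp : 1 ≤ p) :
    coveringFunctional (2 ^ n) (Kpstar n p) ≤ ((n : ℝ) / ((n : ℝ) + 1)) ^ (1 / p) ∧
      ((n : ℝ) / ((n : ℝ) + 1)) ^ (1 / p) < 1 := by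
  have hp0 : (0:ℝ) < p := lt_of_lt_of_le zero_lt_one hp
  have hn1 : (0:ℝ) < (n:ℝ) + 1 := by positivity
  have hnp : (0:ℝ) < (n:ℝ) := by exact_mod_cast hn
  set γp : ℝ := (n : ℝ) / ((n : ℝ) + 1) with hγp
  have hγp0 : 0 < γp := by positivity
  have hγp1 : γp < 1 := by rw [hγp, div_lt_one hn1]; linarith
  set δp : ℝ := 1 / ((n : ℝ) + 1) with hδp
  have hδp0 : 0 < δp := by positivity
  set γ : ℝ := γp ^ (1/p) with hγ
  set δ : ℝ := δp ^ (1/p) with hδ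
  have hγ0 : 0 < γ := Real.rpow_pos_of_pos hγp0 _
  have hδ0 : 0 < δ := Real.rpow_pos_of_pos hδp0 _
  have hγpow : γ ^ p = γp := by
    rw [hγ, one_div, Real.rpow_inv_rpow hγp0.le hp0.ne']
  have hδpow : δ ^ p = δp := by
    rw [hδ, one_div, Real.rpow_inv_rpow hδp0.le hp0.ne']
  refine ⟨?_, Real.rpow_lt_one hγp0.le hγp1 (by positivity)⟩
  -- the finite set of translation centers
  set f : Finset (Fin n) → (Fin n → ℝ) := fun S => fun i => if i ∈ S then δ else 0 with hf
  have hfinj : Function.Injective f := by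
    intro S T hST
    ext i
    have := congrFun hST i
    by_contra hc
    simp only [hf] at this
    by_cases hS : i ∈ S <;> by_cases hT : i ∈ T <;> simp_all [hδ0.ne']
  set C : Set (Fin n → ℝ) := Set.range f with hC
  apply csInf_le
  · exact ⟨0, fun x hx => hx.1.le⟩
  refine ⟨hγ0, C, (Set.finite_range f), ?_, ?_⟩
  · rw [hC, ← Set.image_univ, Set.ncard_image_of_injective _ hfinj, Set.ncard_univ]
    simp [Nat.card_eq_fintype_card, Fintype.card_finset]
  · -- covering
    intro x hx
    obtain ⟨hsum, hpos⟩ := hx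
    set S : Finset (Fin n) := Finset.univ.filter (fun i => δ ≤ x i) with hS
    set z : Fin n → ℝ := fun i => x i - f S i with hz
    have hz0 : ∀ i, 0 ≤ z i := by
      intro i
      simp only [hz, hf]
      by_cases hi : i ∈ S
      · simp only [hi, if_true]
        have : δ ≤ x i := by simpa [hS] using hi
        linarith
      · simpa [hi] using hpos i
    -- key bound on ∑ z i ^ p
    have hzsum : ∑ i, z i ^ p ≤ γp := by
      by_cases hSe : S = ∅
      · have hbd : ∀ i, z i ^ p ≤ δp := by
          intro i
          have hi : i ∉ S := by simp [hSe]
          have hxi : x i < δ := by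
            by_contra hcon
            exact hi (by simp [hS, not_lt.mp hcon])
          have : z i = x i := by simp [hz, hf, hi]
          rw [this, ← hδpow]
          exact Real.rpow_le_rpow (hpos i) hxi.le hp0.le
        calc ∑ i, z i ^ p ≤ ∑ _i : Fin n, δp := Finset.sum_le_sum fun i _ => hbd i
          _ = n * δp := by simp [mul_comm]
          _ = γp := by rw [hδp, hγp]; field_simp
      · have hScard : 1 ≤ (S.card : ℝ) := by
          have : 0 < S.card := Finset.card_pos.mpr (Finset.nonempty_iff_ne_empty.mpr hSe)
          exact_mod_cast this
        have hbd : ∀ i, z i ^ p ≤ x i ^ p - (if i ∈ S then δp else 0) := by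
          intro i
          by_cases hi : i ∈ S
          · have hxi : δ ≤ x i := by simpa [hS] using hi
            have key := rpow_superadd hp (by linarith : (0:ℝ) ≤ x i - δ) hδ0.le
            rw [sub_add_cancel] at key
            have : z i = x i - δ := by simp [hz, hf, hi]
            rw [this, if_pos hi, ← hδpow]
            linarith
          · simp [hz, hf, hi]
        calc ∑ i, z i ^ p ≤ ∑ i, (x i ^ p - (if i ∈ S then δp else 0)) :=
              Finset.sum_le_sum fun i _ => hbd i
          _ = (∑ i, x i ^ p) - S.card * δp := by
              rw [Finset.sum_sub_distrib]
              congr 1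
              rw [Finset.sum_ite_mem, Finset.univ_inter, Finset.sum_const, nsmul_eq_mul]
          _ ≤ 1 - 1 * δp := by
              have : 1 * δp ≤ (S.card : ℝ) * δp := by
                apply mul_le_mul_of_nonneg_right hScard hδp0.le
              linarith
          _ = γp := by rw [hδp, hγp]; field_simp; ring
    -- assemble
    rw [Set.mem_add]
    refine ⟨f S, Set.mem_range_self S, z, ?_, by funext i; simp [hz]⟩
    rw [Set.mem_smul_set]
    have hy0 : ∀ i, 0 ≤ (γ⁻¹ • z) i := by
      intro i
      show 0 ≤ γ⁻¹ * z i
      have := hz0 i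
      positivity
    refine ⟨γ⁻¹ • z, ⟨?_, hy0⟩, smul_inv_smul₀ hγ0.ne' z⟩
    have : ∀ i, (γ⁻¹ • z) i ^ p = γp⁻¹ * z i ^ p := by
      intro i
      show (γ⁻¹ * z i) ^ p = γp⁻¹ * z i ^ p
      rw [Real.mul_rpow (by positivity) (hz0 i), Real.inv_rpow hγ0.le, hγpow]
    rw [Finset.sum_congr rfl (fun i _ => this i), ← Finset.mul_sum]
    calc γp⁻¹ * ∑ i, z i ^ p ≤ γp⁻¹ * γp := by
          apply mul_le_mul_of_nonneg_left hzsum (by positivity)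
      _ = 1 := inv_mul_cancel₀ hγp0.ne'
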